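/- arXiv:2101.06240 — 3 statements merged into one kernel-verified Lean document; each statement's English description precedes it below -/
import Mathlib

section
/- For all real q with 0 ≤ q < 1 and all natural numbers m ≥ 1, the product ∏_{i=1}^{m} (1 - q^{(i+1)/2}) is at least 1 - q^{1/2} - q - q^{3/2} + q^{(m+2)/2}. -/
lemma aux_prod_lb (t : ℝ) (ht0 : 0 ≤ t) (ht1 : t < 1) :
    ∀ m : ℕ, 1 ≤ m →
      1 - t - t^2 - t^3 + t^(m+2) ≤ ∏ i ∈ Finset.Icc 1 m, (1 - t^(i+1)) := by
  intro m hm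
  induction m, hm using Nat.le_induction with
  | base =>
    simp only [Finset.Icc_self, Finset.prod_singleton]
    ring_nf
    nlinarith [pow_nonneg ht0 2, pow_nonneg ht0 3]
  | succ n hn ih =>
    rw [Finset.prod_Icc_succ_top (by omega)]
    have hu1 : t^(n+2) ≤ 1 := pow_le_one₀ ht0 ht1.le
    have hu0 : (0:ℝ) ≤ t^(n+2) := pow_nonneg ht0 _
    have h2 : t^(n+2) ≤ t^2 := pow_le_pow_of_le_one ht0 ht1.le (by omega)
    have step : (1 - t - t^2 - t^3 + t^(n+2)) * (1 - t^(n+1+1)) ≤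
        (∏ i ∈ Finset.Icc 1 n, (1 - t^(i+1))) * (1 - t^(n+1+1)) := by
      apply mul_le_mul_of_nonneg_right ih
      have : t^(n+1+1) ≤ 1 := pow_le_one₀ ht0 ht1.le
      linarith
    refine le_trans ?_ step
    have hpow3 : t^(n+1+2) = t^(n+2) * t := by ring
    have hpow2 : t^(n+1+1) = t^(n+2) := by ring_nf
    rw [hpow2]
    nlinarith [pow_nonneg ht0 3, mul_nonneg hu0 (pow_nonneg ht0 2),
      mul_nonneg hu0 (pow_nonneg ht0 3), mul_le_mul_of_nonneg_left h2 hu0]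

theorem prod_lower_bound (q : ℝ) (hq0 : 0 ≤ q) (hq1 : q < 1) (m : ℕ) (hm : 1 ≤ m) :
    1 - q ^ ((1:ℝ)/2) - q - q ^ ((3:ℝ)/2) + q ^ (((m:ℝ)+2)/2) ≤
      ∏ i ∈ Finset.Icc 1 m, (1 - q ^ (((i:ℝ)+1)/2)) := by
  set t := q ^ ((1:ℝ)/2) with htdef
  have ht0 : 0 ≤ t := Real.rpow_nonneg hq0 _
  have ht1 : t < 1 := by
    rcases eq_or_lt_of_le hq0 with h | h
    · rw [htdef, ← h, Real.zero_rpow (by norm_num)]; norm_num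
    · exact Real.rpow_lt_one hq0 hq1 (by norm_num)
  have key : ∀ n : ℕ, q ^ (((n:ℝ))/2) = t ^ n := by
    intro n
    rw [htdef, ← Real.rpow_natCast (q ^ ((1:ℝ)/2)) n, ← Real.rpow_mul hq0]
    ring_nf
  have h1 : q ^ ((1:ℝ)/2) = t ^ 1 := by
    have := key 1; push_cast at this; simpa using this
  have h2 : q = t ^ 2 := by
    have := key 2; push_cast at this; rw [← this]; norm_num
  have h3 : q ^ ((3:ℝ)/2) = t ^ 3 := by
    have := key 3; push_cast at this; simpa using this
  have hm2 : q ^ (((m:ℝ)+2)/2) = t ^ (m+2) := by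
    have := key (m+2); push_cast at this; simpa using this
  have hi : ∀ i : ℕ, q ^ (((i:ℝ)+1)/2) = t ^ (i+1) := by
    intro i
    have := key (i+1); push_cast at this; simpa using this
  rw [h3, hm2]
  calc 1 - t - q - t^3 + t^(m+2) = 1 - t - t^2 - t^3 + t^(m+2) := by rw [h2]
    _ ≤ ∏ i ∈ Finset.Icc 1 m, (1 - t^(i+1)) := aux_prod_lb t ht0 ht1 m hm
    _ = ∏ i ∈ Finset.Icc 1 m, (1 - q ^ (((i:ℝ)+1)/2)) := by
        apply Finset.prod_congr rfl; intro i _; rw [hi i]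
end

section
/- For all real q with 0 ≤ q < 1 and all natural numbers m ≥ 1, the product ∏_{i=1}^{m} (1 - q^{(i+1)/2}) is at least 1 - 3·q^{1/2}. -/
lemma one_sub_sum_le_prod_one_sub' (f : ℕ → ℝ) (s : Finset ℕ)
    (h0 : ∀ i ∈ s, 0 ≤ f i) (h1 : ∀ i ∈ s, f i ≤ 1) :
    1 - ∑ i ∈ s, f i ≤ ∏ i ∈ s, (1 - f i) := by
  classical
  induction s using Finset.cons_induction with
  | empty => simp
  | cons a s ha ih =>
    rw [Finset.sum_cons, Finset.prod_cons]
    have h0' : ∀ i ∈ s, 0 ≤ f i := fun i hi => h0 i (Finset.mem_cons_of_mem hi)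
    have h1' : ∀ i ∈ s, f i ≤ 1 := fun i hi => h1 i (Finset.mem_cons_of_mem hi)
    have hsum : 0 ≤ ∑ i ∈ s, f i := Finset.sum_nonneg h0'
    have ha0 : 0 ≤ f a := h0 a (Finset.mem_cons_self a s)
    have ha1 : f a ≤ 1 := h1 a (Finset.mem_cons_self a s)
    have := ih h0' h1'
    nlinarith [mul_nonneg ha0 hsum]

lemma third_geom_sum_le (m : ℕ) :
    ∑ i ∈ Finset.Icc 1 m, ((1:ℝ)/3) ^ i ≤ 1/2 - (1/2) * (1/3) ^ m := by
  induction m with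
  | zero => simp
  | succ n ih =>
    rw [Finset.sum_Icc_succ_top (by omega)]
    have hp : (0:ℝ) ≤ (1/3) ^ n := by positivity
    rw [pow_succ]
    nlinarith

theorem prod_lower_bound' (q : ℝ) (hq0 : 0 ≤ q) (hq1 : q < 1) (m : ℕ) (hm : 1 ≤ m) :
    1 - 3 * q ^ ((1:ℝ)/2) ≤ ∏ i ∈ Finset.Icc 1 m, (1 - q ^ (((i:ℝ)+1)/2)) := by
  set r : ℝ := q ^ ((1:ℝ)/2) with hr
  have hr0 : 0 ≤ r := Real.rpow_nonneg hq0 _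
  have hr1 : r < 1 := Real.rpow_lt_one hq0 hq1 (by norm_num)
  have key : ∀ i : ℕ, q ^ (((i:ℝ)+1)/2) = r ^ (i+1) := by
    intro i
    rw [hr, ← Real.rpow_natCast (q ^ ((1:ℝ)/2)) (i+1), ← Real.rpow_mul hq0]
    push_cast
    ring_nf
  have hprod : ∏ i ∈ Finset.Icc 1 m, (1 - q ^ (((i:ℝ)+1)/2))
      = ∏ i ∈ Finset.Icc 1 m, (1 - r ^ (i+1)) := by
    refine Finset.prod_congr rfl fun i _ => by rw [key]
  rw [hprod]
  have hterm0 : ∀ i ∈ Finset.Icc 1 m, 0 ≤ r ^ (i+1) := fun i _ => pow_nonneg hr0 _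
  have hterm1 : ∀ i ∈ Finset.Icc 1 m, r ^ (i+1) ≤ 1 := fun i _ =>
    pow_le_one₀ hr0 hr1.le
  rcases le_or_gt (1/3 : ℝ) r with h | h
  · have hnn : 0 ≤ ∏ i ∈ Finset.Icc 1 m, (1 - r ^ (i+1)) :=
      Finset.prod_nonneg fun i hi => by linarith [hterm1 i hi]
    linarith
  · have hsum : ∑ i ∈ Finset.Icc 1 m, r ^ (i+1) ≤ 3 * r := by
      have h1 : ∑ i ∈ Finset.Icc 1 m, r ^ (i+1)
          ≤ ∑ i ∈ Finset.Icc 1 m, r * (1/3) ^ i := by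
        refine Finset.sum_le_sum fun i _ => ?_
        rw [pow_succ, mul_comm]
        gcongr
      have h2 : ∑ i ∈ Finset.Icc 1 m, r * (1/3) ^ i
          = r * ∑ i ∈ Finset.Icc 1 m, ((1:ℝ)/3) ^ i := by
        rw [Finset.mul_sum]
      have h3 := third_geom_sum_le m
      have hp : (0:ℝ) ≤ (1/3) ^ m := by positivity
      nlinarith
    have := one_sub_sum_le_prod_one_sub' (fun i => r ^ (i+1)) (Finset.Icc 1 m)
      hterm0 hterm1
    linarith
end

section
/- Let G be a finite graph in which some vertex v has 2-neighbourhood type τ₄ (the rooted graph N₄ of the paper: the centre c₁ has three neighbours, one of degree 1 and two of degree 3, each of the degree-3 neighbours having two further leaves). Let u be the neighbour of v of degree 1. Then in G minus the edge uv, no vertex in N_1^G(v) has 2-neighbourhood type τ₄. -/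
/-- The set of vertices at distance at most `r` from `v` in `G`. -/
def nball {V : Type*} (G : SimpleGraph V) (r : ℕ) (v : V) : Set V :=
  {u | G.Reachable v u ∧ G.dist v u ≤ r}

lemma mem_nball_self {V : Type*} (G : SimpleGraph V) (r : ℕ) (v : V) : v ∈ nball G r v :=
  ⟨SimpleGraph.Reachable.refl v, by simp [SimpleGraph.dist_self]⟩

/-- The `r`-neighbourhoods of `w` in `G` and in `H` are isomorphic as rooted graphs. -/
def RootedBallIso {V : Type*} (G H : SimpleGraph V) (r : ℕ) (w : V) : Prop :=
  ∃ φ : (G.induce (nball G r w)) ≃g (H.induce (nball H r w)),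
    (φ ⟨w, mem_nball_self G r w⟩ : V) = w

/-- `w` has `r`-neighbourhood type given by the rooted graph `(T, c)`. -/
def HasBallType {V W : Type*} (G : SimpleGraph V) (r : ℕ) (w : V)
    (T : SimpleGraph W) (c : W) : Prop :=
  ∃ φ : (G.induce (nball G r w)) ≃g (T.induce (nball T r c)),
    (φ ⟨w, mem_nball_self G r w⟩ : W) = c

/-- The rooted tree `N₄` of the paper: centre `0` adjacent to `1, 2, 3`; vertex `1` is a leaf;
vertices `2` and `3` each have two further leaf neighbours. -/
def tau4 : SimpleGraph (Fin 8) :=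
  SimpleGraph.fromRel (fun a b =>
    ((a : ℕ), (b : ℕ)) ∈ ({(0,1),(0,2),(0,3),(2,4),(2,5),(3,6),(3,7)} : Set (ℕ × ℕ)))

instance tau4.decAdj : DecidableRel tau4.Adj := fun a b =>
  decidable_of_iff (a ≠ b ∧
    ((((a:ℕ),(b:ℕ)) = (0,1) ∨ ((a:ℕ),(b:ℕ)) = (0,2) ∨ ((a:ℕ),(b:ℕ)) = (0,3) ∨
      ((a:ℕ),(b:ℕ)) = (2,4) ∨ ((a:ℕ),(b:ℕ)) = (2,5) ∨ ((a:ℕ),(b:ℕ)) = (3,6) ∨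
      ((a:ℕ),(b:ℕ)) = (3,7)) ∨
     (((b:ℕ),(a:ℕ)) = (0,1) ∨ ((b:ℕ),(a:ℕ)) = (0,2) ∨ ((b:ℕ),(a:ℕ)) = (0,3) ∨
      ((b:ℕ),(a:ℕ)) = (2,4) ∨ ((b:ℕ),(a:ℕ)) = (2,5) ∨ ((b:ℕ),(a:ℕ)) = (3,6) ∨
      ((b:ℕ),(a:ℕ)) = (3,7))))
    (by rw [tau4, SimpleGraph.fromRel_adj]; simp [Set.mem_insert_iff])

lemma nball_tau4 : nball tau4 2 0 = Set.univ := by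
  have key : ∀ (a : Fin 8) (p : tau4.Walk 0 a), p.length ≤ 2 → a ∈ nball tau4 2 0 :=
    fun a p hp => ⟨⟨p⟩, le_trans (SimpleGraph.dist_le p) hp⟩
  ext a
  simp only [Set.mem_univ, iff_true]
  fin_cases a
  · exact key _ .nil (by simp)
  · exact key _ (.cons (by decide) .nil) (by simp)
  · exact key _ (.cons (by decide) .nil) (by simp)
  · exact key _ (.cons (by decide) .nil) (by simp)
  · exact key _ (.cons (show tau4.Adj 0 2 by decide) (.cons (by decide) .nil)) (by simp)
  · exact key _ (.cons (show tau4.Adj 0 2 by decide) (.cons (by decide) .nil)) (by simp)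
  · exact key _ (.cons (show tau4.Adj 0 3 by decide) (.cons (by decide) .nil)) (by simp)
  · exact key _ (.cons (show tau4.Adj 0 3 by decide) (.cons (by decide) .nil)) (by simp)

lemma tau4_card (a : Fin 8) :
    Nat.card (tau4.neighborSet a) = 1 ∨ Nat.card (tau4.neighborSet a) = 3 := by
  rw [Nat.card_eq_fintype_card, SimpleGraph.card_neighborSet_eq_degree]
  revert a; decide

lemma card_induce_neighborSet {V : Type*} (H : SimpleGraph V) (S : Set V) {x : V}
    (hx : x ∈ S) (hsub : H.neighborSet x ⊆ S) :
    Nat.card ((H.induce S).neighborSet ⟨x, hx⟩) = Nat.card (H.neighborSet x) := by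
  apply Nat.card_congr
  exact { toFun := fun y => ⟨y.1.1, y.2⟩
          invFun := fun z => ⟨⟨z.1, hsub z.2⟩, z.2⟩
          left_inv := fun y => by ext; rfl
          right_inv := fun z => rfl }

lemma iso_card {V W : Type*} {A : SimpleGraph V} {B : SimpleGraph W} (φ : A ≃g B) (x : V) :
    Nat.card (A.neighborSet x) = Nat.card (B.neighborSet (φ x)) :=
  Nat.card_congr (φ.mapNeighborSet x)

lemma ball_deg_mem {V : Type*} (H : SimpleGraph V) (x : V)
    (h : HasBallType H 2 x tau4 0) (y : V) (hy : y ∈ nball H 2 x)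
    (hsub : H.neighborSet y ⊆ nball H 2 x) :
    Nat.card (H.neighborSet y) = 1 ∨ Nat.card (H.neighborSet y) = 3 := by
  obtain ⟨φ, -⟩ := h
  have h1 := card_induce_neighborSet H (nball H 2 x) hy hsub
  have h2 := iso_card φ ⟨y, hy⟩
  have h3 := card_induce_neighborSet tau4 (nball tau4 2 0) (φ ⟨y, hy⟩).2
    (fun z _ => by have hz := Set.mem_univ z; rwa [← nball_tau4] at hz)
  rw [← h1, h2, h3]
  exact tau4_card _

lemma adj_of_walk_length_le_one {V : Type*} {H : SimpleGraph V} {a b : V}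
    (p : H.Walk a b) (hp : p.length ≤ 1) : a = b ∨ H.Adj a b := by
  cases p with
  | nil => exact Or.inl rfl
  | cons h q =>
    cases q with
    | nil => exact Or.inr h
    | cons h' q' => simp [SimpleGraph.Walk.length_cons] at hp

theorem no_tau4_in_ball_after_deletion {V : Type*} [Fintype V] (G : SimpleGraph V)
    (v u : V) (hv : HasBallType G 2 v tau4 0) (huv : G.Adj u v)
    (hu : (G.neighborSet u).ncard = 1) :
    ∀ w ∈ nball G 1 v, ¬ HasBallType (G.deleteEdges {s(u,v)}) 2 w tau4 0 := by
  classical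
  intro w hw hw2
  set G' := G.deleteEdges {s(u,v)} with hG'
  have hne : u ≠ v := huv.ne
  -- neighborhood of u is {v}
  have hNu : G.neighborSet u = {v} := by
    rw [Set.ncard_eq_one] at hu
    obtain ⟨a, ha⟩ := hu
    have hvmem : v ∈ G.neighborSet u := huv
    rw [ha] at hvmem ⊢
    rw [Set.mem_singleton_iff] at hvmem
    rw [hvmem]
  -- degree of v in G is 1 or 3
  have hsubv : G.neighborSet v ⊆ nball G 2 v := fun y hy =>
    ⟨⟨.cons ((SimpleGraph.mem_neighborSet _ _ _).1 hy) .nil⟩, le_trans (SimpleGraph.dist_le (.cons ((SimpleGraph.mem_neighborSet _ _ _).1 hy) .nil)) (by simp)⟩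
  have hdegv := ball_deg_mem G v hv v (mem_nball_self G 2 v) hsubv
  by_cases hwu : w = u
  · -- w = u : ball of u in G' is trivial, degree 0
    subst hwu
    have hN'u : G'.neighborSet w = ∅ := by
      ext y
      simp only [SimpleGraph.mem_neighborSet, hG', SimpleGraph.deleteEdges_adj,
        Set.mem_singleton_iff, Set.mem_empty_iff_false, iff_false, not_and, not_not]
      intro hadj
      have hyv : y ∈ G.neighborSet w := hadj
      rw [hNu, Set.mem_singleton_iff] at hyv
      rw [hyv]
    have h0 := ball_deg_mem G' w hw2 w (mem_nball_self G' 2 w)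
      (by rw [hN'u]; exact Set.empty_subset _)
    rw [hN'u] at h0
    simp at h0
  · -- w ≠ u : v has degree 2 in G' within the ball of w
    obtain ⟨hreach, hdist⟩ := hw
    obtain ⟨p0, hp0⟩ := hreach.exists_walk_length_eq_dist
    have hcase := adj_of_walk_length_le_one p0 (hp0 ▸ hdist)
    -- a walk from w to v in G' of length ≤ 1
    obtain ⟨p, hp⟩ : ∃ p : G'.Walk w v, p.length ≤ 1 := by
      rcases hcase with h | h
      · subst h; exact ⟨.nil, Nat.zero_le _⟩
      · refine ⟨.cons ?_ .nil, le_of_eq (by rw [SimpleGraph.Walk.length_cons, SimpleGraph.Walk.length_nil])⟩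
        rw [hG', SimpleGraph.deleteEdges_adj]
        refine ⟨h.symm, ?_⟩
        simp only [Set.mem_singleton_iff, Sym2.eq_iff]
        push_neg
        constructor
        · intro hwu'; exact absurd hwu' hwu
        · intro hwv; exact absurd hwv.symm h.ne
    have hvmem' : v ∈ nball G' 2 w :=
      ⟨⟨p⟩, le_trans (SimpleGraph.dist_le p) (by omega)⟩
    have hsub' : G'.neighborSet v ⊆ nball G' 2 w := fun y hy =>
      ⟨⟨p.append (.cons ((SimpleGraph.mem_neighborSet _ _ _).1 hy) .nil)⟩,
        le_trans (SimpleGraph.dist_le (p.append (.cons ((SimpleGraph.mem_neighborSet _ _ _).1 hy) .nil)))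
          (by rw [SimpleGraph.Walk.length_append]; simp; omega)⟩
    have hc2 := ball_deg_mem G' w hw2 v hvmem' hsub'
    -- G'.neighborSet v = G.neighborSet v \ {u}
    have hN'v : G'.neighborSet v = G.neighborSet v \ {u} := by
      ext y
      simp only [SimpleGraph.mem_neighborSet, hG', SimpleGraph.deleteEdges_adj,
        Set.mem_singleton_iff, Set.mem_diff, Sym2.eq_iff]
      have hvu : v ≠ u := Ne.symm hne
      tauto
    have humem : u ∈ G.neighborSet v := huv.symm
    have hcard' : (G.neighborSet v \ {u}).ncard = (G.neighborSet v).ncard - 1 :=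
      Set.ncard_diff_singleton_of_mem humem
    rw [hN'v] at hc2
    rw [Nat.card_coe_set_eq, hcard'] at hc2
    rw [Nat.card_coe_set_eq] at hdegv
    rcases hdegv with h | h <;> rw [h] at hc2 <;> omega
end
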